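/- Soundness of the reachability algorithm: in a finitely-branching transition system, if breadth-first search from the initial state up to depth max (Algorithm 2) returns a state u with trace tr, then u is reachable from init by the trace tr of actions (each consecutive pair related by the transition relation) and u satisfies the non-refinement constraint, i.e., u is a reachable unsafe state. -/
import Mathlib

/-- Reachability by a trace of actions. -/
def ReachBy {S A : Type*} (step : S → A → S → Prop) : S → List A → S → Prop
  | s, [], u => u = s
  | s, a :: tr, u => ∃ s1, step s a s1 ∧ ReachBy step s1 tr u

/-- Abstract characterisation of the states (with their traces) explored by
bounded breadth-first search from `init` up to depth `max` (Algorithm 2). -/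
inductive Explored {S A : Type*} (step : S → A → S → Prop) (init : S) (max : ℕ) :
    S → List A → Prop
  | init : Explored step init max init []
  | step {s : S} {tr : List A} {a : A} {s' : S} :
      Explored step init max s tr → tr.length < max → step s a s' →
      Explored step init max s' (tr ++ [a])

lemma ReachBy_snoc {S A : Type*} (step : S → A → S → Prop) :
    ∀ (tr : List A) (s0 s : S) (a : A) (s' : S),
      ReachBy step s0 tr s → step s a s' → ReachBy step s0 (tr ++ [a]) s' := by
  intro tr
  induction tr with
  | nil => intro s0 s a s' h hs; cases h; exact ⟨s', hs, rfl⟩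
  | cons b tr ih =>
    intro s0 s a s' h hs
    obtain ⟨s1, h1, h2⟩ := h
    exact ⟨s1, h1, ih s1 s a s' h2 hs⟩

lemma explored_sound {S A : Type*} (step : S → A → S → Prop) (init : S) (max : ℕ)
    (u : S) (tr : List A) (hret : Explored step init max u tr) :
    ReachBy step init tr u ∧ tr.length ≤ max := by
  induction hret with
  | init => exact ⟨rfl, by simp⟩
  | @step s tr a s' h hlt hs ih =>
    refine ⟨ReachBy_snoc step tr init s a s' ih.1 hs, ?_⟩
    simp only [List.length_append, List.length_singleton]
    omega

/-- Soundness of Algorithm 2: any state returned by bounded BFS (an explored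
state satisfying the non-refinement constraint `U`) is reachable from `init` by
its trace within `max` steps and is unsafe. -/
theorem bfs_sound {S A : Type*} (step : S → A → S → Prop) (init : S) (max : ℕ)
    (U : S → Prop) (u : S) (tr : List A)
    (hret : Explored step init max u tr) (hU : U u) :
    ReachBy step init tr u ∧ tr.length ≤ max ∧ U u :=
  ⟨(explored_sound step init max u tr hret).1,
   (explored_sound step init max u tr hret).2, hU⟩
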